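/- For all α ∈ ℝ and τ ∈ ℝ, the exponential moment of V' under the Gibbs measure satisfies ∫_ℝ exp(α V'(r)) dλ_τ(r) ≤ exp(α τ + (c₂/2) α²). -/

import Mathlib

open MeasureTheory Real
open scoped ENNReal NNReal

lemma aux_tangent {f : ℝ → ℝ} (hd : Differentiable ℝ f) (hd' : Differentiable ℝ (deriv f))
    (h'' : ∀ r, 0 ≤ deriv (deriv f) r) (x y : ℝ) : f x + deriv f x * (y - x) ≤ f y := by
  have hconv : ConvexOn ℝ Set.univ f := by
    refine convexOn_univ_of_deriv2_nonneg hd hd' (fun r => ?_)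
    simpa [Function.iterate_succ_apply', Function.iterate_one] using h'' r
  rcases lt_trichotomy x y with h | h | h
  · have hs := hconv.deriv_le_slope (Set.mem_univ x) (Set.mem_univ y) h (hd x)
    rw [slope_def_field] at hs
    have hxy : 0 < y - x := by linarith
    have := (le_div_iff₀ hxy).mp hs
    linarith
  · simp [h]
  · have hs := hconv.slope_le_deriv (Set.mem_univ y) (Set.mem_univ x) h (hd x)
    rw [slope_def_field] at hs
    have hxy : 0 < x - y := by linarith
    have h2 := (div_le_iff₀ hxy).mp hs
    have h3 : deriv f x * (y - x) = -(deriv f x * (x - y)) := by ring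
    linarith

lemma quad_tangent (V : ℝ → ℝ) (a : ℝ) (hdV : Differentiable ℝ V)
    (hdV' : Differentiable ℝ (deriv V)) (h : ∀ r, deriv (deriv V) r ≤ a) (x y : ℝ) :
    (a/2*x^2 - V x) + (a*x - deriv V x) * (y - x) ≤ a/2*y^2 - V y := by
  set f : ℝ → ℝ := fun s => a/2*s^2 - V s with hf
  have hH : ∀ s : ℝ, HasDerivAt f (a * s - deriv V s) s := by
    intro s
    have h1 : HasDerivAt (fun x : ℝ => a/2 * x^2) (a/2 * (↑(2:ℕ) * s ^ (2-1))) s :=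
      (hasDerivAt_pow 2 s).const_mul (a/2)
    have h2 := h1.sub (hdV s).hasDerivAt
    exact h2.congr_deriv (by push_cast; ring)
  have hdf : Differentiable ℝ f := fun s => (hH s).differentiableAt
  have hf' : deriv f = fun s => a * s - deriv V s := funext fun s => (hH s).deriv
  have hdf' : Differentiable ℝ (deriv f) := by
    rw [hf']; exact (differentiable_id.const_mul a).sub hdV'
  have hH2 : ∀ s : ℝ, deriv (deriv f) s = a - deriv (deriv V) s := by
    intro s
    rw [hf']
    have : HasDerivAt (fun s : ℝ => a * s - deriv V s) (a * 1 - deriv (deriv V) s) s :=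
      ((hasDerivAt_id s).const_mul a).sub (hdV' s).hasDerivAt
    rw [this.deriv]; ring
  have := aux_tangent hdf hdf' (fun r => by rw [hH2 r]; linarith [h r]) x y
  rwa [hf'] at this

lemma gibbs_integrable (V : ℝ → ℝ) (c₁ : ℝ) (hc₁ : 0 < c₁) (hdV : Differentiable ℝ V)
    (hdV' : Differentiable ℝ (deriv V)) (hcV : Continuous V)
    (hlow : ∀ r : ℝ, c₁ ≤ deriv (deriv V) r) (τ : ℝ) :
    Integrable (fun r : ℝ => Real.exp (τ * r - V r)) := by
  -- lower quadratic bound on V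
  have hW : ∀ r, deriv (deriv (fun s => -V s)) r ≤ -c₁ := by
    intro r
    have e1 : deriv (fun s => -V s) = fun s => -(deriv V s) := by
      funext s; exact deriv.neg
    rw [e1]
    have e2 : deriv (fun s => -(deriv V s)) r = -(deriv (deriv V) r) := deriv.neg
    rw [e2]
    linarith [hlow r]
  have hlb : ∀ r : ℝ, V 0 + deriv V 0 * r + c₁/2 * r^2 ≤ V r := by
    intro r
    have := quad_tangent (fun s => -V s) (-c₁) hdV.neg
      (by
        have e1 : deriv (fun s => -V s) = fun s => -(deriv V s) := by
          funext s; exact deriv.neg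
        rw [e1]; exact hdV'.neg) hW 0 r
    have e1 : deriv (fun s => -V s) 0 = -(deriv V 0) := deriv.neg
    rw [e1] at this
    nlinarith [this]
  set b := τ - deriv V 0 with hb
  set C := Real.exp (-V 0 + b^2/(2*c₁)) with hC
  set m := b / c₁ with hm
  have hg : Integrable (fun r : ℝ => C * Real.exp (-(c₁/2) * (r - m)^2)) := by
    exact ((integrable_exp_neg_mul_sq (by linarith : (0:ℝ) < c₁/2)).comp_sub_right m).const_mul C
  refine hg.mono' ?_ ?_
  · exact (Continuous.rexp (by continuity : Continuous fun r : ℝ => τ * r - V r)).aestronglyMeasurable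
  · refine Filter.Eventually.of_forall (fun r => ?_)
    rw [Real.norm_eq_abs, abs_of_nonneg (Real.exp_nonneg _), hC, ← Real.exp_add]
    apply Real.exp_le_exp.mpr
    have key : -V 0 + b^2/(2*c₁) + -(c₁/2) * (r - m)^2 = -V 0 + b*r - c₁/2*r^2 := by
      rw [hm]; field_simp; ring
    rw [key, hb]
    nlinarith [hlb r]

/-- The Gibbs function `G(τ) = log ∫ exp(τ r - V(r)) dr`. -/
noncomputable def gibbsG (V : ℝ → ℝ) (τ : ℝ) : ℝ :=
  Real.log (∫ r : ℝ, Real.exp (τ * r - V r))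

/-- The Gibbs probability measure `λ_τ` with density `exp(τ r - V(r) - G(τ))`
with respect to Lebesgue measure. -/
noncomputable def gibbsMeasure (V : ℝ → ℝ) (τ : ℝ) : Measure ℝ :=
  (volume : Measure ℝ).withDensity
    (fun r => ENNReal.ofReal (Real.exp (τ * r - V r - gibbsG V τ)))

/-- for all `α, τ ∈ ℝ`, the exponential moment of `V'` under the Gibbs
measure satisfies `∫ exp(α V'(r)) dλ_τ(r) ≤ exp(α τ + (c₂/2) α²)`. -/
theorem gibbs_expMoment_of_Vprime_le
    (V : ℝ → ℝ) (c₁ c₂ : ℝ) (hc₁ : 0 < c₁)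
    (hV : ContDiff ℝ 2 V)
    (hlow : ∀ r : ℝ, c₁ ≤ deriv (deriv V) r)
    (hhigh : ∀ r : ℝ, deriv (deriv V) r ≤ c₂) :
    ∀ α τ : ℝ,
      (∫ r : ℝ, Real.exp (α * deriv V r) ∂(gibbsMeasure V τ))
        ≤ Real.exp (α * τ + c₂ / 2 * α ^ 2) := by
  intro α τ
  have hdV : Differentiable ℝ V := hV.differentiable (by norm_num)
  have hdV' : Differentiable ℝ (deriv V) := by
    have h2 : ContDiff ℝ ((1 : WithTop ℕ∞)+1) V := by convert hV using 2; norm_num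
    exact (contDiff_succ_iff_deriv.mp h2).2.2.differentiable one_ne_zero
  have hZ : Integrable (fun r : ℝ => Real.exp (τ * r - V r)) :=
    gibbs_integrable V c₁ hc₁ hdV hdV' hV.continuous hlow τ
  have hZpos : 0 < ∫ r : ℝ, Real.exp (τ * r - V r) := integral_exp_pos hZ
  set G := gibbsG V τ with hG
  -- key pointwise inequality
  have key : ∀ r : ℝ, α * deriv V r ≤ V r - V (r - α) + c₂/2 * α^2 := by
    intro r
    have := quad_tangent V c₂ hdV hdV' hhigh r (r - α)
    nlinarith [this]
  -- unfold withDensity integral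
  have hcont : Continuous fun r : ℝ => τ * r - V r - G :=
    ((continuous_const.mul continuous_id).sub hV.continuous).sub continuous_const
  have hmeas : Measurable fun r : ℝ => Real.toNNReal (Real.exp (τ * r - V r - G)) :=
    (continuous_real_toNNReal.comp (Real.continuous_exp.comp hcont)).measurable
  have hrw : gibbsMeasure V τ = volume.withDensity
      (fun r : ℝ => ((fun r : ℝ => Real.toNNReal (Real.exp (τ * r - V r - G))) r : ℝ≥0∞)) := rfl
  rw [hrw, integral_withDensity_eq_integral_smul hmeas]
  have heq : ∀ r : ℝ, (Real.toNNReal (Real.exp (τ * r - V r - G))) •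
      Real.exp (α * deriv V r) = Real.exp (τ * r - V r - G + α * deriv V r) := by
    intro r
    rw [NNReal.smul_def, smul_eq_mul, Real.coe_toNNReal _ (Real.exp_nonneg _), ← Real.exp_add]
  simp_rw [heq]
  -- dominating function
  set g : ℝ → ℝ := fun r => Real.exp (α * τ + c₂/2*α^2 - G) * Real.exp (τ * (r - α) - V (r - α))
    with hg
  have hgint : Integrable g := (hZ.comp_sub_right α).const_mul _
  have hle : (∫ r : ℝ, Real.exp (τ * r - V r - G + α * deriv V r)) ≤ ∫ r : ℝ, g r := by
    refine integral_mono_of_nonneg (Filter.Eventually.of_forall fun r => (Real.exp_nonneg _))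
      hgint (Filter.Eventually.of_forall fun r => ?_)
    rw [hg]
    simp only [← Real.exp_add]
    apply Real.exp_le_exp.mpr
    have := key r
    ring_nf
    nlinarith [key r]
  refine hle.trans ?_
  have : (∫ r : ℝ, g r) = Real.exp (α * τ + c₂/2*α^2 - G) * ∫ r : ℝ, Real.exp (τ * r - V r) := by
    rw [hg, integral_const_mul]
    congr 1
    exact integral_sub_right_eq_self (fun s => Real.exp (τ * s - V s)) α
  rw [this, hG, gibbsG, Real.exp_sub, Real.exp_log hZpos]
  exact le_of_eq (by field_simp)
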